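/- In every Hilbert geometry, for each R > 0 there exist constants 0 < v(R) ≤ V(R), independent of the convex set, such that the volume of any metric ball of radius R in any n-dimensional Hilbert geometry (Ω, d_Ω) is between v(R) and V(R). Consequently, there is K = K(n) such that in any Hilbert geometry, every ball of radius 4 can be covered by at most K balls of radius 1. -/

import Mathlib

open Metric MeasureTheory

noncomputable section
open scoped Classical

variable {E : Type*} [NormedAddCommGroup E] [NormedSpace ℝ E]

def chordSup (Ω : Set E) (x y : E) : ℝ := sSup {t : ℝ | x + t • (y - x) ∈ Ω}

def chordInf (Ω : Set E) (x y : E) : ℝ := sInf {t : ℝ | x + t • (y - x) ∈ Ω}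

def chordA (Ω : Set E) (x y : E) : E := x + chordSup Ω x y • (y - x)

def chordB (Ω : Set E) (x y : E) : E := x + chordInf Ω x y • (y - x)

/-- The Hilbert distance `d_Ω(x,y) = ½ log [a:b:x:y]`. -/
def hilbertDist (Ω : Set E) (x y : E) : ℝ :=
  if x = y then 0 else
    (1 / 2) * Real.log ((dist (chordA Ω x y) x * dist (chordB Ω x y) y) /
      (dist (chordA Ω x y) y * dist (chordB Ω x y) x))

/-- Metric ball of the Hilbert geometry `(Ω, d_Ω)`. -/
def hilbertBall (Ω : Set E) (x : E) (R : ℝ) : Set E := {y ∈ Ω | hilbertDist Ω x y < R}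

/-- Time to exit `Ω` from `x` in direction `v`. -/
def exitTime (Ω : Set E) (x v : E) : ℝ := sSup {t : ℝ | 0 < t ∧ x + t • v ∈ Ω}

/-- The Finsler norm of the Hilbert metric at `x ∈ Ω`. -/
def finslerNorm (Ω : Set E) (x v : E) : ℝ :=
  (1 / 2) * (1 / exitTime Ω x v + 1 / exitTime Ω x (-v))

/-- The Busemann volume of `A ⊆ Ω` in the Hilbert geometry `(Ω, d_Ω)`:
the integral over `A` of the ratio of the Lebesgue volume of the Euclidean unit ball to
the Lebesgue volume of the unit ball of the Finsler norm. -/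
def busemannVolume {n : ℕ} (Ω : Set (EuclideanSpace ℝ (Fin n)))
    (A : Set (EuclideanSpace ℝ (Fin n))) : ENNReal :=
  ∫⁻ x in A, ENNReal.ofReal
    ((volume (ball (0 : EuclideanSpace ℝ (Fin n)) 1)).toReal /
      (volume {v : EuclideanSpace ℝ (Fin n) | finslerNorm Ω x v < 1}).toReal)

end

noncomputable section HilbertGeometryAux
open scoped Pointwise Classical

variable {E : Type*} [NormedAddCommGroup E] [NormedSpace ℝ E]

section Geom

variable {Ω : Set E} {x y v : E}

lemma lineMap_continuous (x v : E) : Continuous (fun t : ℝ => x + t • v) := by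
  continuity

lemma exitSet_nonempty (hΩo : IsOpen Ω) (hx : x ∈ Ω) (v : E) :
    ∃ t : ℝ, 0 < t ∧ x + t • v ∈ Ω := by
  have hc : ContinuousAt (fun t : ℝ => x + t • v) 0 := (lineMap_continuous x v).continuousAt
  have h0 : (fun t : ℝ => x + t • v) 0 ∈ Ω := by simpa using hx
  have hnb : (fun t : ℝ => x + t • v) ⁻¹' Ω ∈ nhds (0:ℝ) := hc.preimage_mem_nhds (hΩo.mem_nhds h0)
  rcases Metric.mem_nhds_iff.1 hnb with ⟨ε, hε, hb⟩
  refine ⟨ε/2, by linarith, ?_⟩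
  have : (ε/2 : ℝ) ∈ Metric.ball (0:ℝ) ε := by
    simp [Real.ball_eq_Ioo]; constructor <;> linarith
  exact hb this

lemma exitSet_bddAbove (hb : Bornology.IsBounded Ω) (hv : v ≠ 0) :
    BddAbove {t : ℝ | 0 < t ∧ x + t • v ∈ Ω} := by
  rcases (isBounded_iff_forall_norm_le.1 hb) with ⟨M, hM⟩
  refine ⟨(M + ‖x‖) / ‖v‖, fun t ht => ?_⟩
  have h1 : ‖x + t • v‖ ≤ M := hM _ ht.2
  have h2 : ‖t • v‖ - ‖x‖ ≤ ‖x + t • v‖ := by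
    have h3 := norm_add_le (-x) (x + t • v)
    simp only [norm_neg] at h3
    have h4 : -x + (x + t • v) = t • v := by abel
    rw [h4] at h3
    linarith
  have h5 : ‖t • v‖ = t * ‖v‖ := by
    rw [norm_smul, Real.norm_eq_abs, abs_of_pos ht.1]
  have hv' : 0 < ‖v‖ := norm_pos_iff.2 hv
  rw [div_eq_mul_inv]
  rw [h5] at h2
  have : t * ‖v‖ ≤ M + ‖x‖ := by linarith
  calc t = t * ‖v‖ * ‖v‖⁻¹ := by field_simp
  _ ≤ (M + ‖x‖) * ‖v‖⁻¹ := by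
    apply mul_le_mul_of_nonneg_right this (by positivity)

lemma exitTime_pos (hΩo : IsOpen Ω) (hb : Bornology.IsBounded Ω) (hx : x ∈ Ω) (hv : v ≠ 0) :
    0 < exitTime Ω x v := by
  rcases exitSet_nonempty hΩo hx v with ⟨t, ht⟩
  exact lt_of_lt_of_le ht.1 (le_csSup (exitSet_bddAbove hb hv) ht)

lemma exitTime_nonneg (hΩo : IsOpen Ω) (hx : x ∈ Ω) (v : E) :
    0 ≤ exitTime Ω x v := by
  rcases exitSet_nonempty hΩo hx v with ⟨t, ht⟩
  by_cases hbdd : BddAbove {t : ℝ | 0 < t ∧ x + t • v ∈ Ω}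
  · exact le_trans ht.1.le (le_csSup hbdd ht)
  · rw [exitTime, Real.sSup_of_not_bddAbove hbdd]

lemma mem_of_lt_exitTime (hΩc : Convex ℝ Ω) (hx : x ∈ Ω) {t : ℝ}
    (ht0 : 0 < t) (ht : t < exitTime Ω x v) : x + t • v ∈ Ω := by
  have hne : {s : ℝ | 0 < s ∧ x + s • v ∈ Ω}.Nonempty := by
    by_contra h
    rw [Set.not_nonempty_iff_eq_empty] at h
    rw [exitTime, h, Real.sSup_empty] at ht
    linarith
  obtain ⟨u, hu, htu⟩ := exists_lt_of_lt_csSup hne ht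
  have hu0 : 0 < u := hu.1
  have hcomb : x + t • v = (1 - t/u) • x + (t/u) • (x + u • v) := by
    have : (t/u) • (u • v) = t • v := by
      rw [smul_smul]; congr 1; field_simp
    rw [smul_add, this]
    module
  rw [hcomb]
  have htu1 : 0 ≤ t/u := by positivity
  have htu2 : t/u ≤ 1 := by rw [div_le_one hu0]; exact htu.le
  exact hΩc hx hu.2 (by linarith) htu1 (by ring)

lemma lt_exitTime_of_mem (hΩo : IsOpen Ω) (hb : Bornology.IsBounded Ω) (hv : v ≠ 0)
    {t : ℝ} (ht0 : 0 < t) (htm : x + t • v ∈ Ω) : t < exitTime Ω x v := by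
  have hnb : (fun s : ℝ => x + s • v) ⁻¹' Ω ∈ nhds t :=
    ((lineMap_continuous x v).continuousAt).preimage_mem_nhds (hΩo.mem_nhds htm)
  rcases Metric.mem_nhds_iff.1 hnb with ⟨ε, hε, hball⟩
  have hmem : x + (t + ε/2) • v ∈ Ω := by
    apply hball
    simp [Real.ball_eq_Ioo]
    constructor <;> linarith
  have : t + ε/2 ≤ exitTime Ω x v :=
    le_csSup (exitSet_bddAbove hb hv) ⟨by linarith, hmem⟩
  linarith

lemma exitTime_dir_zero (hΩo : IsOpen Ω) (hx : x ∈ Ω) : exitTime Ω x (0:E) = 0 := by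
  have hset : {t : ℝ | 0 < t ∧ x + t • (0:E) ∈ Ω} = Set.Ioi 0 := by
    ext t; simp [hx]
  rw [exitTime, hset, Real.sSup_of_not_bddAbove]
  intro h
  rcases h with ⟨M, hM⟩
  have h1 : (max M 0 + 1 : ℝ) ∈ Set.Ioi 0 := by
    simp only [Set.mem_Ioi]
    have : (0:ℝ) ≤ max M 0 := le_max_right _ _
    linarith
  have := hM h1
  have h2 : (M:ℝ) ≤ max M 0 := le_max_left _ _
  linarith

lemma exitTime_smul (hΩo : IsOpen Ω) (hΩc : Convex ℝ Ω) (hb : Bornology.IsBounded Ω)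
    (hx : x ∈ Ω) {c : ℝ} (hc : 0 < c) (v : E) :
    exitTime Ω x (c • v) = c⁻¹ * exitTime Ω x v := by
  by_cases hv : v = 0
  · subst hv; rw [smul_zero, exitTime_dir_zero hΩo hx, mul_zero]
  have hcv : c • v ≠ 0 := smul_ne_zero hc.ne' hv
  have hiff : ∀ t : ℝ, (0 < t ∧ x + t • (c • v) ∈ Ω) ↔ (0 < t ∧ x + (t*c) • v ∈ Ω) := by
    intro t; rw [smul_smul]
  apply le_antisymm
  · apply csSup_le
    · rcases exitSet_nonempty hΩo hx (c • v) with ⟨t, ht⟩; exact ⟨t, ht⟩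
    · intro t ht
      rw [Set.mem_setOf_eq, hiff t] at ht
      have h1 : t * c ≤ exitTime Ω x v :=
        le_csSup (exitSet_bddAbove hb hv) ⟨mul_pos ht.1 hc, ht.2⟩
      rw [le_inv_mul_iff₀ hc, mul_comm]
      exact h1
  · rw [inv_mul_le_iff₀ hc, mul_comm c]
    apply csSup_le
    · rcases exitSet_nonempty hΩo hx v with ⟨t, ht⟩; exact ⟨t, ht⟩
    · intro t ht
      have : t/c ≤ exitTime Ω x (c • v) := by
        apply le_csSup (exitSet_bddAbove hb hcv)
        rw [Set.mem_setOf_eq, hiff]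
        rcases ht with ⟨ht1, ht2⟩
        constructor
        · positivity
        · have : t/c*c = t := by field_simp
          rw [this]; exact ht2
      calc t = (t/c) * c := by field_simp
      _ ≤ exitTime Ω x (c • v) * c := mul_le_mul_of_nonneg_right this hc.le

lemma finslerNorm_smul (hΩo : IsOpen Ω) (hΩc : Convex ℝ Ω) (hb : Bornology.IsBounded Ω)
    (hx : x ∈ Ω) {c : ℝ} (hc : 0 < c) (v : E) :
    finslerNorm Ω x (c • v) = c * finslerNorm Ω x v := by
  rw [finslerNorm, finslerNorm, ← smul_neg, exitTime_smul hΩo hΩc hb hx hc,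
    exitTime_smul hΩo hΩc hb hx hc]
  have hc' : c ≠ 0 := hc.ne'
  rcases eq_or_ne (exitTime Ω x v) 0 with h | h <;>
  rcases eq_or_ne (exitTime Ω x (-v)) 0 with h2 | h2 <;>
  simp [h, h2] <;> field_simp <;> ring

lemma chord_param (hΩo : IsOpen Ω) (hΩc : Convex ℝ Ω) (hb : Bornology.IsBounded Ω)
    (hx : x ∈ Ω) (hy : y ∈ Ω) (hxy : x ≠ y) :
    ∃ a b : ℝ, a < 0 ∧ 1 < b ∧
      (∀ t : ℝ, x + t • (y - x) ∈ Ω ↔ a < t ∧ t < b) ∧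
      Real.exp (2 * hilbertDist Ω x y) = (b * (1 - a)) / ((b - 1) * (-a)) := by
  set v := y - x with hv
  have hvne : v ≠ 0 := sub_ne_zero.2 (Ne.symm hxy)
  set T := {t : ℝ | x + t • v ∈ Ω} with hT
  have hT0 : (0:ℝ) ∈ T := by simp [hT, hx]
  have hT1 : (1:ℝ) ∈ T := by
    simp only [hT, Set.mem_setOf_eq, one_smul, hv]
    simpa using hy
  have hTne : T.Nonempty := ⟨0, hT0⟩
  have hTbdd : BddAbove T := by
    rcases (isBounded_iff_forall_norm_le.1 hb) with ⟨M, hM⟩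
    have hv' : 0 < ‖v‖ := norm_pos_iff.2 hvne
    refine ⟨(M + ‖x‖) / ‖v‖, fun t ht => ?_⟩
    have h1 : ‖x + t • v‖ ≤ M := hM _ ht
    have h2 : ‖t • v‖ - ‖x‖ ≤ ‖x + t • v‖ := by
      have h3 := norm_add_le (-x) (x + t • v)
      simp only [norm_neg] at h3
      have h4 : -x + (x + t • v) = t • v := by abel
      rw [h4] at h3; linarith
    have h5 : t * ‖v‖ ≤ ‖t • v‖ := by
      rw [norm_smul, Real.norm_eq_abs]
      exact mul_le_mul_of_nonneg_right (le_abs_self t) (norm_nonneg v)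
    rw [le_div_iff₀ hv']
    linarith
  have hTbddb : BddBelow T := by
    rcases (isBounded_iff_forall_norm_le.1 hb) with ⟨M, hM⟩
    have hv' : 0 < ‖v‖ := norm_pos_iff.2 hvne
    refine ⟨-((M + ‖x‖) / ‖v‖), fun t ht => ?_⟩
    have h1 : ‖x + t • v‖ ≤ M := hM _ ht
    have h2 : ‖t • v‖ - ‖x‖ ≤ ‖x + t • v‖ := by
      have h3 := norm_add_le (-x) (x + t • v)
      simp only [norm_neg] at h3
      have h4 : -x + (x + t • v) = t • v := by abel
      rw [h4] at h3; linarith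
    have h5 : -t * ‖v‖ ≤ ‖t • v‖ := by
      rw [norm_smul, Real.norm_eq_abs]
      exact mul_le_mul_of_nonneg_right (neg_le_abs t) (norm_nonneg v)
    have h6 : -t ≤ (M + ‖x‖)/‖v‖ := by rw [le_div_iff₀ hv']; linarith
    linarith
  have hTopen : IsOpen T := (lineMap_continuous x v).isOpen_preimage _ hΩo
  have hTconv : Convex ℝ T := by
    intro t1 h1 t2 h2 p q hp hq hpq
    show x + (p * t1 + q * t2) • v ∈ Ω
    have hcmb : x + (p * t1 + q * t2) • v = p • (x + t1 • v) + q • (x + t2 • v) := by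
      have h1 : (p + q) • x = x := by rw [hpq, one_smul]
      calc x + (p * t1 + q * t2) • v = (p + q) • x + (p * t1 + q * t2) • v := by rw [h1]
      _ = p • (x + t1 • v) + q • (x + t2 • v) := by module
    rw [hcmb]
    exact hΩc h1 h2 hp hq hpq
  set a := sInf T with ha
  set b := sSup T with hbdef
  have hmem : ∀ t : ℝ, x + t • v ∈ Ω ↔ a < t ∧ t < b := by
    intro t
    constructor
    · intro ht
      have hnb : T ∈ nhds t := hTopen.mem_nhds ht
      rcases Metric.mem_nhds_iff.1 hnb with ⟨ε, hε, hball⟩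
      have hp : t + ε/2 ∈ T := hball (by simp [Real.ball_eq_Ioo]; constructor <;> linarith)
      have hm : t - ε/2 ∈ T := hball (by simp [Real.ball_eq_Ioo]; constructor <;> linarith)
      constructor
      · exact lt_of_le_of_lt (csInf_le hTbddb hm) (by linarith)
      · exact lt_of_lt_of_le (by linarith) (le_csSup hTbdd hp)
    · rintro ⟨h1, h2⟩
      obtain ⟨u, hu, htu⟩ := exists_lt_of_lt_csSup hTne h2
      obtain ⟨l, hl, hlt⟩ := exists_lt_of_csInf_lt hTne h1
      exact hTconv.ordConnected.out hl hu ⟨hlt.le, htu.le⟩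
  have ha0 : a < 0 := ((hmem 0).1 (by simpa using hx)).1
  have hb1 : 1 < b := by
    have := (hmem 1).1 (by simpa [hv] using hy)
    exact this.2
  have hb0 : 0 < b := lt_trans one_pos hb1
  refine ⟨a, b, ha0, hb1, hmem, ?_⟩
  have hcsup : chordSup Ω x y = b := rfl
  have hcinf : chordInf Ω x y = a := rfl
  have hnv : 0 < ‖v‖ := norm_pos_iff.2 hvne
  have dAx : dist (chordA Ω x y) x = b * ‖v‖ := by
    rw [chordA, hcsup, dist_eq_norm]
    have : x + b • v - x = b • v := by abel
    rw [this, norm_smul, Real.norm_eq_abs, abs_of_pos hb0]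
  have dAy : dist (chordA Ω x y) y = (b - 1) * ‖v‖ := by
    rw [chordA, hcsup, dist_eq_norm]
    have : x + b • v - y = (b - 1) • v := by
      rw [sub_smul, one_smul, hv]; abel
    rw [this, norm_smul, Real.norm_eq_abs, abs_of_pos (by linarith)]
  have dBy : dist (chordB Ω x y) y = (1 - a) * ‖v‖ := by
    rw [chordB, hcinf, dist_eq_norm]
    have : x + a • v - y = -((1 - a) • v) := by
      rw [sub_smul, one_smul, hv]; abel
    rw [this, norm_neg, norm_smul, Real.norm_eq_abs, abs_of_pos (by linarith)]
  have dBx : dist (chordB Ω x y) x = (-a) * ‖v‖ := by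
    rw [chordB, hcinf, dist_eq_norm]
    have : x + a • v - x = a • v := by abel
    rw [this, norm_smul, Real.norm_eq_abs, abs_of_neg ha0, neg_mul]
  have hX : (dist (chordA Ω x y) x * dist (chordB Ω x y) y) /
      (dist (chordA Ω x y) y * dist (chordB Ω x y) x)
      = (b * (1 - a)) / ((b - 1) * (-a)) := by
    rw [dAx, dAy, dBy, dBx]
    have hb1' : (0:ℝ) < b - 1 := by linarith
    have ha0' : (0:ℝ) < -a := by linarith
    rw [div_eq_div_iff (by positivity) (by positivity)]
    ring
  have hXpos : 0 < (b * (1 - a)) / ((b - 1) * (-a)) := by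
    apply div_pos (by nlinarith) (by nlinarith)
  rw [hilbertDist, if_neg hxy, hX]
  rw [show (2:ℝ) * ((1/2) * Real.log ((b * (1 - a)) / ((b - 1) * (-a))))
      = Real.log ((b * (1 - a)) / ((b - 1) * (-a))) by ring]
  exact Real.exp_log hXpos

lemma exitTime_concave (hΩo : IsOpen Ω) (hΩc : Convex ℝ Ω) (hb : Bornology.IsBounded Ω)
    {x0 x1 : E} (h0 : x0 ∈ Ω) (h1 : x1 ∈ Ω) (hv : v ≠ 0) {θ : ℝ}
    (hθ0 : 0 ≤ θ) (hθ1 : θ ≤ 1) :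
    (1 - θ) * exitTime Ω x0 v + θ * exitTime Ω x1 v ≤ exitTime Ω ((1 - θ) • x0 + θ • x1) v := by
  set τ0 := exitTime Ω x0 v with hτ0
  set τ1 := exitTime Ω x1 v with hτ1
  have hτ0p : 0 < τ0 := exitTime_pos hΩo hb h0 hv
  have hτ1p : 0 < τ1 := exitTime_pos hΩo hb h1 hv
  set A := (1 - θ) * τ0 + θ * τ1 with hA
  have hApos : 0 < A := by rcases le_total τ0 τ1 with h | h <;> nlinarith
  set xθ := (1 - θ) • x0 + θ • x1 with hxθ
  have hxθΩ : xθ ∈ Ω := hΩc h0 h1 (by linarith) hθ0 (by ring)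
  by_contra hcon
  push_neg at hcon
  set τθ := exitTime Ω xθ v with hτθ
  have hτθp : 0 < τθ := exitTime_pos hΩo hb hxθΩ hv
  set t := (τθ + A) / 2 with ht
  have htp : 0 < t := by positivity
  have ht1 : τθ < t := by rw [ht]; linarith
  have ht2 : t < A := by rw [ht]; linarith
  set t0 := t * τ0 / A with ht0
  set t1 := t * τ1 / A with ht1d
  have ht0p : 0 < t0 := by positivity
  have ht1p : 0 < t1 := by positivity
  have ht0lt : t0 < τ0 := by
    rw [ht0, div_lt_iff₀ hApos]
    nlinarith
  have ht1lt : t1 < τ1 := by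
    rw [ht1d, div_lt_iff₀ hApos]
    nlinarith
  have hm0 : x0 + t0 • v ∈ Ω := mem_of_lt_exitTime hΩc h0 ht0p ht0lt
  have hm1 : x1 + t1 • v ∈ Ω := mem_of_lt_exitTime hΩc h1 ht1p ht1lt
  have hco : (1 - θ) * t0 + θ * t1 = t := by
    rw [ht0, ht1d]
    field_simp
    ring
  have hvec : xθ + t • v = (1 - θ) • (x0 + t0 • v) + θ • (x1 + t1 • v) := by
    rw [← hco, hxθ]
    module
  have hmem : xθ + t • v ∈ Ω := by
    rw [hvec]
    exact hΩc hm0 hm1 (by linarith) hθ0 (by ring)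
  have := lt_exitTime_of_mem hΩo hb hv htp hmem
  rw [← hτθ] at this
  linarith

lemma exitTime_harnack (hΩo : IsOpen Ω) (hΩc : Convex ℝ Ω) (hb : Bornology.IsBounded Ω)
    (hx : x ∈ Ω) (hy : y ∈ Ω) (v : E) :
    Real.exp (-(2 * hilbertDist Ω x y)) * exitTime Ω x v ≤ exitTime Ω y v ∧
      Real.exp (-(2 * hilbertDist Ω x y)) * exitTime Ω y v ≤ exitTime Ω x v := by
  by_cases hv : v = 0
  · subst hv
    rw [exitTime_dir_zero hΩo hx, exitTime_dir_zero hΩo hy, mul_zero]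
    exact ⟨le_refl _, le_refl _⟩
  by_cases hxy : x = y
  · subst hxy
    rw [hilbertDist, if_pos rfl]
    norm_num
  obtain ⟨a, b, ha0, hb1, hmem, hX⟩ := chord_param hΩo hΩc hb hx hy hxy
  set d := hilbertDist Ω x y with hd
  set c := Real.exp (-(2 * d)) with hc
  have hcpos : 0 < c := Real.exp_pos _
  have hb0 : (0:ℝ) < b := by linarith
  have hb1' : (0:ℝ) < b - 1 := by linarith
  have ha0' : (0:ℝ) < -a := by linarith
  have ha1' : (0:ℝ) < 1 - a := by linarith
  have hXc : c = ((b - 1) * (-a)) / (b * (1 - a)) := by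
    rw [hc, Real.exp_neg, hX, inv_div]
  have hcb : c * b < b - 1 := by
    have h1 : c * (b * (1 - a)) = (b - 1) * (-a) := by
      rw [hXc]; field_simp
    nlinarith
  have hca : c * (1 - a) < -a := by
    have h1 : c * (b * (1 - a)) = (b - 1) * (-a) := by
      rw [hXc]; field_simp
    nlinarith
  have hc1 : c < 1 := by nlinarith
  have h1c : (0:ℝ) < 1 - c := by linarith
  constructor
  · -- c * τx ≤ τy
    set u0 : ℝ := 1 / (1 - c) with hu0
    have hu0b : u0 < b := by
      rw [hu0, div_lt_iff₀ h1c]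
      nlinarith
    have hu01 : 1 < u0 := by
      rw [hu0, lt_div_iff₀ h1c]
      nlinarith
    set u : ℝ := (u0 + b) / 2 with hu
    have hu1 : 1 < u := by rw [hu]; linarith
    have hub : u < b := by rw [hu]; linarith
    have huu0 : u0 ≤ u := by rw [hu]; linarith
    have hup : (0:ℝ) < u := by linarith
    set z := x + u • (y - x) with hz
    have hzΩ : z ∈ Ω := (hmem u).2 ⟨by linarith, hub⟩
    set θ : ℝ := 1 / u with hθ
    have hθ0 : 0 ≤ θ := by positivity
    have hθ1 : θ ≤ 1 := by
      rw [hθ, div_le_one hup]; linarith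
    have hcomb : (1 - θ) • x + θ • z = y := by
      have hθu : θ * u = 1 := by rw [hθ]; field_simp
      have : (1 - θ) • x + θ • z = x + (θ * u) • (y - x) := by
        rw [hz]; module
      rw [this, hθu, one_smul]
      abel
    have hcv := exitTime_concave hΩo hΩc hb hx hzΩ hv hθ0 hθ1
    rw [hcomb] at hcv
    have hτz : 0 ≤ exitTime Ω z v := exitTime_nonneg hΩo hzΩ v
    have hτx : 0 ≤ exitTime Ω x v := exitTime_nonneg hΩo hx v
    have hfrac : c ≤ 1 - θ := by
      rw [hθ]
      have h2 : 1 / u ≤ 1 / u0 := by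
        apply div_le_div_of_nonneg_left one_pos.le (by linarith) huu0
      have h3 : 1 / u0 = 1 - c := by rw [hu0]; field_simp
      linarith [h2, h3.le]
    calc c * exitTime Ω x v ≤ (1 - θ) * exitTime Ω x v :=
          mul_le_mul_of_nonneg_right hfrac hτx
    _ ≤ (1 - θ) * exitTime Ω x v + θ * exitTime Ω z v := by
          have h8 := mul_nonneg hθ0 hτz
          linarith
    _ ≤ exitTime Ω y v := hcv
  · -- c * τy ≤ τx
    set u0 : ℝ := -c / (1 - c) with hu0
    have hu0a : a < u0 := by
      rw [hu0, lt_div_iff₀ h1c]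
      nlinarith
    have hu00 : u0 < 0 := by
      rw [hu0]
      apply div_neg_of_neg_of_pos (by linarith) h1c
    set u : ℝ := (a + u0) / 2 with hu
    have hua : a < u := by rw [hu]; linarith
    have hu0' : u < 0 := by rw [hu]; linarith
    have huu0 : u ≤ u0 := by rw [hu]; linarith
    set z := x + u • (y - x) with hz
    have hzΩ : z ∈ Ω := (hmem u).2 ⟨hua, by linarith⟩
    have h1u : (0:ℝ) < 1 - u := by linarith
    set θ : ℝ := -u / (1 - u) with hθ
    have hθ0 : 0 ≤ θ := by
      apply div_nonneg (by linarith) h1u.le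
    have hθ1 : θ ≤ 1 := by
      rw [hθ, div_le_one h1u]; linarith
    have hcomb : (1 - θ) • z + θ • y = x := by
      have h1θ : 1 - θ = 1 / (1 - u) := by
        rw [hθ]; field_simp; ring
      have hzero : (1 - θ) * u + θ = 0 := by
        rw [h1θ, hθ]; field_simp; ring
      have hstep : (1 - θ) • z + θ • y = x + ((1 - θ) * u + θ) • (y - x) := by
        rw [hz]
        have hy' : y = x + (1:ℝ) • (y - x) := by rw [one_smul]; abel
        calc (1 - θ) • (x + u • (y - x)) + θ • y
            = (1 - θ) • (x + u • (y - x)) + θ • (x + (1:ℝ) • (y - x)) := by rw [← hy']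
        _ = x + ((1 - θ) * u + θ) • (y - x) := by module
      rw [hstep, hzero, zero_smul, add_zero]
    have hcv := exitTime_concave hΩo hΩc hb hzΩ hy hv hθ0 hθ1
    rw [hcomb] at hcv
    have hτz : 0 ≤ exitTime Ω z v := exitTime_nonneg hΩo hzΩ v
    have hτy : 0 ≤ exitTime Ω y v := exitTime_nonneg hΩo hy v
    have hfrac : c ≤ θ := by
      rw [hθ, le_div_iff₀ h1u]
      have h7 : u * (1 - c) ≤ -c := by
        have := mul_le_mul_of_nonneg_right huu0 h1c.le
        rwa [hu0, div_mul_cancel₀ (-c) h1c.ne'] at this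
      nlinarith
    calc c * exitTime Ω y v ≤ θ * exitTime Ω y v :=
          mul_le_mul_of_nonneg_right hfrac hτy
    _ ≤ (1 - θ) * exitTime Ω z v + θ * exitTime Ω y v := by
          have h8 := mul_nonneg (by linarith : (0:ℝ) ≤ 1 - θ) hτz
          linarith
    _ ≤ exitTime Ω x v := hcv

lemma finslerNorm_nonneg (hΩo : IsOpen Ω) (hx : x ∈ Ω) (v : E) :
    0 ≤ finslerNorm Ω x v := by
  have h1 := exitTime_nonneg hΩo hx v
  have h2 := exitTime_nonneg hΩo hx (-v)
  rw [finslerNorm]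
  positivity

lemma finslerNorm_zero_vec (hΩo : IsOpen Ω) (hx : x ∈ Ω) :
    finslerNorm Ω x (0:E) = 0 := by
  rw [finslerNorm, neg_zero, exitTime_dir_zero hΩo hx]
  norm_num

lemma finsler_harnack (hΩo : IsOpen Ω) (hΩc : Convex ℝ Ω) (hb : Bornology.IsBounded Ω)
    (hx : x ∈ Ω) (hy : y ∈ Ω) (v : E) :
    finslerNorm Ω y v ≤ Real.exp (2 * hilbertDist Ω x y) * finslerNorm Ω x v ∧
      finslerNorm Ω x v ≤ Real.exp (2 * hilbertDist Ω x y) * finslerNorm Ω y v := by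
  by_cases hv : v = 0
  · subst hv
    rw [finslerNorm_zero_vec hΩo hx, finslerNorm_zero_vec hΩo hy, mul_zero]
    exact ⟨le_refl _, le_refl _⟩
  have hvn : (-v) ≠ 0 := neg_ne_zero.2 hv
  set d := hilbertDist Ω x y with hd
  set c := Real.exp (-(2 * d)) with hc
  have hcpos : 0 < c := Real.exp_pos _
  have hinv : Real.exp (2 * d) = c⁻¹ := by
    rw [hc, Real.exp_neg, inv_inv]
  have main : ∀ z w : E, z ∈ Ω → w ∈ Ω →
      (c * exitTime Ω w v ≤ exitTime Ω z v) →
      (c * exitTime Ω w (-v) ≤ exitTime Ω z (-v)) →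
      finslerNorm Ω z v ≤ c⁻¹ * finslerNorm Ω w v := by
    intro z w hz hw h1 h2
    have hτw1 : 0 < exitTime Ω w v := exitTime_pos hΩo hb hw hv
    have hτw2 : 0 < exitTime Ω w (-v) := exitTime_pos hΩo hb hw hvn
    have hτz1 : 0 < exitTime Ω z v := exitTime_pos hΩo hb hz hv
    have hτz2 : 0 < exitTime Ω z (-v) := exitTime_pos hΩo hb hz hvn
    have e1 : 1 / exitTime Ω z v ≤ c⁻¹ * (1 / exitTime Ω w v) := by
      calc 1 / exitTime Ω z v ≤ 1 / (c * exitTime Ω w v) :=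
            one_div_le_one_div_of_le (mul_pos hcpos hτw1) h1
      _ = c⁻¹ * (1 / exitTime Ω w v) := by
          rw [one_div, mul_inv, one_div]
    have e2 : 1 / exitTime Ω z (-v) ≤ c⁻¹ * (1 / exitTime Ω w (-v)) := by
      calc 1 / exitTime Ω z (-v) ≤ 1 / (c * exitTime Ω w (-v)) :=
            one_div_le_one_div_of_le (mul_pos hcpos hτw2) h2
      _ = c⁻¹ * (1 / exitTime Ω w (-v)) := by
          rw [one_div, mul_inv, one_div]
    rw [finslerNorm, finslerNorm]
    calc (1:ℝ)/2 * (1 / exitTime Ω z v + 1 / exitTime Ω z (-v))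
        ≤ (1:ℝ)/2 * (c⁻¹ * (1 / exitTime Ω w v) + c⁻¹ * (1 / exitTime Ω w (-v))) := by
          linarith
    _ = c⁻¹ * ((1:ℝ)/2 * (1 / exitTime Ω w v + 1 / exitTime Ω w (-v))) := by ring
  have H1 := exitTime_harnack hΩo hΩc hb hx hy v
  have H2 := exitTime_harnack hΩo hΩc hb hx hy (-v)
  rw [hinv]
  exact ⟨main y x hy hx H1.1 H2.1, main x y hx hy H1.2 H2.2⟩

def symB (Ω : Set E) (x : E) : Set E := {w : E | x + w ∈ Ω ∧ x - w ∈ Ω}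

lemma symB_zero_mem (hx : x ∈ Ω) : (0:E) ∈ symB Ω x := by
  constructor <;> simpa [symB]

lemma symB_isOpen (hΩo : IsOpen Ω) : IsOpen (symB Ω x) := by
  have h1 : IsOpen {w : E | x + w ∈ Ω} :=
    (continuous_const.add continuous_id).isOpen_preimage _ hΩo
  have h2 : IsOpen {w : E | x - w ∈ Ω} :=
    (continuous_const.sub continuous_id).isOpen_preimage _ hΩo
  exact h1.inter h2

lemma symB_convex (hΩc : Convex ℝ Ω) : Convex ℝ (symB Ω x) := by
  intro w1 h1 w2 h2 p q hp hq hpq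
  constructor
  · have : x + (p • w1 + q • w2) = p • (x + w1) + q • (x + w2) := by
      have hone : (p + q) • x = x := by rw [hpq, one_smul]
      calc x + (p • w1 + q • w2) = (p + q) • x + (p • w1 + q • w2) := by rw [hone]
      _ = p • (x + w1) + q • (x + w2) := by module
    rw [this]
    exact hΩc h1.1 h2.1 hp hq hpq
  · have : x - (p • w1 + q • w2) = p • (x - w1) + q • (x - w2) := by
      have hone : (p + q) • x = x := by rw [hpq, one_smul]
      calc x - (p • w1 + q • w2) = (p + q) • x - (p • w1 + q • w2) := by rw [hone]
      _ = p • (x - w1) + q • (x - w2) := by module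
    rw [this]
    exact hΩc h1.2 h2.2 hp hq hpq

lemma symB_neg_mem {w : E} (hw : w ∈ symB Ω x) : -w ∈ symB Ω x := by
  refine ⟨?_, ?_⟩
  · have := hw.2; rwa [sub_eq_add_neg] at this
  · have := hw.1; rwa [← sub_neg_eq_add] at this

lemma symB_exitTime_gt_one (hΩo : IsOpen Ω) (hb : Bornology.IsBounded Ω)
    {w : E} (hw : w ∈ symB Ω x) (hwne : w ≠ 0) :
    1 < exitTime Ω x w ∧ 1 < exitTime Ω x (-w) := by
  constructor
  · apply lt_exitTime_of_mem hΩo hb hwne one_pos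
    rw [one_smul]; exact hw.1
  · apply lt_exitTime_of_mem hΩo hb (neg_ne_zero.2 hwne) one_pos
    rw [one_smul, ← sub_eq_add_neg]; exact hw.2

lemma symB_subset_W (hΩo : IsOpen Ω) (hb : Bornology.IsBounded Ω) (hx : x ∈ Ω) :
    symB Ω x ⊆ {v : E | finslerNorm Ω x v < 1} := by
  intro w hw
  by_cases hwne : w = 0
  · subst hwne
    simp only [Set.mem_setOf_eq, finslerNorm_zero_vec hΩo hx]
    norm_num
  obtain ⟨hτ1, hτ2⟩ := symB_exitTime_gt_one hΩo hb hw hwne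
  simp only [Set.mem_setOf_eq, finslerNorm]
  have h1 : 1 / exitTime Ω x w < 1 := by
    rw [div_lt_one (by linarith)]; linarith
  have h2 : 1 / exitTime Ω x (-w) < 1 := by
    rw [div_lt_one (by linarith)]; linarith
  linarith

lemma W_subset_two_symB (hΩo : IsOpen Ω) (hΩc : Convex ℝ Ω) (hb : Bornology.IsBounded Ω)
    (hx : x ∈ Ω) :
    {v : E | finslerNorm Ω x v < 1} ⊆ (2:ℝ) • symB Ω x := by
  intro v hv
  by_cases hvne : v = 0
  · subst hvne
    exact ⟨0, symB_zero_mem hx, by simp⟩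
  have hτ1 : 0 < exitTime Ω x v := exitTime_pos hΩo hb hx hvne
  have hτ2 : 0 < exitTime Ω x (-v) := exitTime_pos hΩo hb hx (neg_ne_zero.2 hvne)
  simp only [Set.mem_setOf_eq, finslerNorm] at hv
  have ha : 0 < 1 / exitTime Ω x v := by positivity
  have hb' : 0 < 1 / exitTime Ω x (-v) := by positivity
  have h1 : 1 / exitTime Ω x v < 2 := by linarith
  have h2 : 1 / exitTime Ω x (-v) < 2 := by linarith
  have hgt1 : (1:ℝ)/2 < exitTime Ω x v := by
    have := (div_lt_iff₀ hτ1).1 h1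
    linarith
  have hgt2 : (1:ℝ)/2 < exitTime Ω x (-v) := by
    have := (div_lt_iff₀ hτ2).1 h2
    linarith
  have hm1 : x + ((1:ℝ)/2) • v ∈ Ω := mem_of_lt_exitTime hΩc hx (by norm_num) hgt1
  have hm2 : x + ((1:ℝ)/2) • (-v) ∈ Ω := mem_of_lt_exitTime hΩc hx (by norm_num) hgt2
  refine ⟨((1:ℝ)/2) • v, ⟨hm1, ?_⟩, ?_⟩
  · rwa [smul_neg, ← sub_eq_add_neg] at hm2
  · show (2:ℝ) • (((1:ℝ)/2) • v) = v
    rw [smul_smul]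
    norm_num

lemma hilbertDist_self (Ω : Set E) (x : E) : hilbertDist Ω x x = 0 := by
  rw [hilbertDist, if_pos rfl]

lemma mem_hilbertBall_self (hx : x ∈ Ω) {R : ℝ} (hR : 0 < R) : x ∈ hilbertBall Ω x R :=
  ⟨hx, by rw [hilbertDist_self]; exact hR⟩

lemma one_lt_exp_ball {R : ℝ} (hR : 0 < R) : 1 < Real.exp (2 * R) := by
  calc (1:ℝ) = Real.exp 0 := Real.exp_zero.symm
  _ < Real.exp (2 * R) := Real.exp_lt_exp.2 (by linarith)

lemma ball_subset_smul (hΩo : IsOpen Ω) (hΩc : Convex ℝ Ω) (hb : Bornology.IsBounded Ω)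
    (hx : x ∈ Ω) {R : ℝ} (hR : 0 < R) {y : E} (hy : y ∈ hilbertBall Ω x R) :
    y - x ∈ (Real.exp (2 * R) - 1) • symB Ω x := by
  obtain ⟨hyΩ, hdR⟩ := hy
  set ρ := Real.exp (2 * R) with hρ
  have hρ1 : 1 < ρ := one_lt_exp_ball hR
  have hρ1' : (0:ℝ) < ρ - 1 := by linarith
  by_cases hxy : x = y
  · subst hxy
    exact ⟨0, symB_zero_mem hx, by simp⟩
  obtain ⟨a, b, ha0, hb1, hmem, hX⟩ := chord_param hΩo hΩc hb hx hyΩ hxy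
  have hb1' : (0:ℝ) < b - 1 := by linarith
  have ha0' : (0:ℝ) < -a := by linarith
  have hXρ : (b * (1 - a)) / ((b - 1) * (-a)) < ρ := by
    rw [← hX, hρ]
    exact Real.exp_lt_exp.2 (by linarith)
  set p := b / (b - 1) with hp
  set q := (1 - a) / (-a) with hq
  have hpq : p * q = (b * (1 - a)) / ((b - 1) * (-a)) := div_mul_div_comm _ _ _ _
  have hp1 : 1 < p := (one_lt_div hb1').2 (by linarith)
  have hq1 : 1 < q := (one_lt_div ha0').2 (by linarith)
  have hpρ : p < ρ := by
    have h2 : p < p * q := lt_mul_of_one_lt_right (by linarith) hq1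
    rw [hpq] at h2
    linarith
  have hqρ : q < ρ := by
    have h2 : q < q * p := lt_mul_of_one_lt_right (by linarith) hp1
    rw [mul_comm, hpq] at h2
    linarith
  have hbb : 1 / (ρ - 1) < b := by
    rw [div_lt_iff₀ hρ1']
    rw [hp, div_lt_iff₀ hb1'] at hpρ
    nlinarith
  have haa : 1 / (ρ - 1) < -a := by
    rw [div_lt_iff₀ hρ1']
    rw [hq, div_lt_iff₀ ha0'] at hqρ
    nlinarith
  rw [one_div] at hbb haa
  have htpos : (0:ℝ) < (ρ - 1)⁻¹ := by positivity
  have h1 : x + (ρ - 1)⁻¹ • (y - x) ∈ Ω := by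
    rw [hmem]
    exact ⟨by linarith, hbb⟩
  have h2 : x - (ρ - 1)⁻¹ • (y - x) ∈ Ω := by
    have : x - (ρ - 1)⁻¹ • (y - x) = x + (-(ρ - 1)⁻¹) • (y - x) := by
      rw [neg_smul, ← sub_eq_add_neg]
    rw [this, hmem]
    exact ⟨by linarith, by linarith⟩
  refine ⟨(ρ - 1)⁻¹ • (y - x), ⟨h1, h2⟩, ?_⟩
  show (ρ - 1) • ((ρ - 1)⁻¹ • (y - x)) = y - x
  rw [smul_smul, mul_inv_cancel₀ hρ1'.ne', one_smul]

lemma smul_subset_ball (hΩo : IsOpen Ω) (hΩc : Convex ℝ Ω) (hb : Bornology.IsBounded Ω)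
    (hx : x ∈ Ω) {R : ℝ} (hR : 0 < R) {w : E} (hw : w ∈ symB Ω x) :
    x + ((Real.exp (2 * R) - 1) / (Real.exp (2 * R) + 1)) • w ∈ hilbertBall Ω x R := by
  set ρ := Real.exp (2 * R) with hρ
  have hρ1 : 1 < ρ := one_lt_exp_ball hR
  set s := (ρ - 1) / (ρ + 1) with hs
  have hs0 : 0 < s := by
    apply div_pos (by linarith) (by linarith)
  have hs1 : s < 1 := by
    rw [hs, div_lt_one (by linarith)]
    linarith
  by_cases hw0 : w = 0
  · subst hw0
    rw [smul_zero, add_zero]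
    exact mem_hilbertBall_self hx hR
  set y := x + s • w with hy
  have hyΩ : y ∈ Ω := by
    have hcomb : y = (1 - s) • x + s • (x + w) := by
      have hone : ((1 - s) + s) • x = x := by rw [sub_add_cancel, one_smul]
      calc y = ((1 - s) + s) • x + s • w := by rw [hone, hy]
      _ = (1 - s) • x + s • (x + w) := by module
    rw [hcomb]
    exact hΩc hx hw.1 (by linarith) hs0.le (by ring)
  have hxy : x ≠ y := by
    intro h
    have : s • w = 0 := by
      have := h ▸ hy
      rw [hy] at h
      have h2 : x + s • w - x = 0 := by rw [← h]; abel
      rwa [add_sub_cancel_left] at h2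
    exact hw0 (by
      have := smul_eq_zero.1 this
      rcases this with h | h
      · exact absurd h hs0.ne'
      · exact h)
  obtain ⟨a, b, ha0, hb1, hmem, hX⟩ := chord_param hΩo hΩc hb hx hyΩ hxy
  have hb1' : (0:ℝ) < b - 1 := by linarith
  have ha0' : (0:ℝ) < -a := by linarith
  have hyx : y - x = s • w := by rw [hy]; abel
  have hb' : 1 / s < b := by
    have := (hmem (1/s)).1 (by
      rw [hyx, smul_smul, one_div, inv_mul_cancel₀ hs0.ne', one_smul]
      exact hw.1)
    exact this.2
  have ha' : 1 / s < -a := by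
    have := (hmem (-(1/s))).1 (by
      rw [hyx, smul_smul, neg_mul, one_div, inv_mul_cancel₀ hs0.ne', neg_smul, one_smul,
        ← sub_eq_add_neg]
      exact hw.2)
    linarith [this.1]
  have hbs : 1 < b * s := by
    rw [div_lt_iff₀ hs0] at hb'
    linarith
  have has : 1 < (-a) * s := by
    rw [div_lt_iff₀ hs0] at ha'
    linarith
  have f1 : b / (b - 1) < 1 / (1 - s) := by
    rw [div_lt_div_iff₀ hb1' (by linarith)]
    nlinarith
  have f2 : (1 - a) / (-a) < 1 + s := by
    rw [div_lt_iff₀ ha0']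
    nlinarith
  have hXlt : (b * (1 - a)) / ((b - 1) * (-a)) < (1 / (1 - s)) * (1 + s) := by
    rw [← div_mul_div_comm]
    apply mul_lt_mul'' f1 f2 (div_nonneg (by linarith) hb1'.le) (div_nonneg (by linarith) ha0'.le)
  have hid : (1 / (1 - s)) * (1 + s) = ρ := by
    have hρp : (0:ℝ) < ρ + 1 := by linarith
    have h1 : (1:ℝ) - s = 2 / (ρ + 1) := by
      rw [hs]
      field_simp
      ring
    have h2 : (1:ℝ) + s = 2 * ρ / (ρ + 1) := by
      rw [hs]
      field_simp
      ring
    rw [h1, h2, one_div_div, div_mul_div_comm]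
    rw [div_eq_iff (by positivity)]
    ring
  have hdR : hilbertDist Ω x y < R := by
    have hexp : Real.exp (2 * hilbertDist Ω x y) < ρ := by
      rw [hX]
      exact lt_of_lt_of_le hXlt (le_of_eq hid)
    rw [hρ] at hexp
    have := Real.exp_lt_exp.1 hexp
    linarith
  exact ⟨hyΩ, hdR⟩

lemma symB_compare (hΩo : IsOpen Ω) (hΩc : Convex ℝ Ω) (hb : Bornology.IsBounded Ω)
    (hx : x ∈ Ω) {R : ℝ} {y : E} (hy : y ∈ hilbertBall Ω x R) :
    Real.exp (-(2 * R)) • symB Ω x ⊆ symB Ω y := by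
  rintro u ⟨w, hw, rfl⟩
  by_cases hw0 : w = 0
  · subst hw0
    show Real.exp (-(2 * R)) • (0:E) ∈ symB Ω y
    rw [smul_zero]
    exact symB_zero_mem hy.1
  obtain ⟨hτ1, hτ2⟩ := symB_exitTime_gt_one hΩo hb hw hw0
  have hd : hilbertDist Ω x y < R := hy.2
  have hc : Real.exp (-(2 * R)) < Real.exp (-(2 * hilbertDist Ω x y)) :=
    Real.exp_lt_exp.2 (by linarith)
  have hcpos : (0:ℝ) < Real.exp (-(2 * R)) := Real.exp_pos _
  have H1 := (exitTime_harnack hΩo hΩc hb hx hy.1 w).1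
  have H2 := (exitTime_harnack hΩo hΩc hb hx hy.1 (-w)).1
  have key1 : Real.exp (-(2 * R)) < exitTime Ω y w := by
    calc Real.exp (-(2 * R)) < Real.exp (-(2 * hilbertDist Ω x y)) := hc
    _ ≤ Real.exp (-(2 * hilbertDist Ω x y)) * exitTime Ω x w := by
        nlinarith [Real.exp_pos (-(2 * hilbertDist Ω x y))]
    _ ≤ exitTime Ω y w := H1
  have key2 : Real.exp (-(2 * R)) < exitTime Ω y (-w) := by
    calc Real.exp (-(2 * R)) < Real.exp (-(2 * hilbertDist Ω x y)) := hc
    _ ≤ Real.exp (-(2 * hilbertDist Ω x y)) * exitTime Ω x (-w) := by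
        nlinarith [Real.exp_pos (-(2 * hilbertDist Ω x y))]
    _ ≤ exitTime Ω y (-w) := H2
  show Real.exp (-(2 * R)) • w ∈ symB Ω y
  constructor
  · exact mem_of_lt_exitTime hΩc hy.1 hcpos key1
  · have := mem_of_lt_exitTime hΩc hy.1 hcpos key2
    rwa [smul_neg, ← sub_eq_add_neg] at this

lemma symB_isBounded (hb : Bornology.IsBounded Ω) (x : E) :
    Bornology.IsBounded (symB Ω x) := by
  rcases (isBounded_iff_forall_norm_le.1 hb) with ⟨M, hM⟩
  rw [isBounded_iff_forall_norm_le]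
  refine ⟨M + ‖x‖, fun w hw => ?_⟩
  have h1 : ‖x + w‖ ≤ M := hM _ hw.1
  have h2 : ‖w‖ - ‖x‖ ≤ ‖x + w‖ := by
    have h3 := norm_add_le (-x) (x + w)
    simp only [norm_neg] at h3
    have h4 : -x + (x + w) = w := by abel
    rw [h4] at h3
    linarith
  linarith

lemma W_compare (hΩo : IsOpen Ω) (hΩc : Convex ℝ Ω) (hb : Bornology.IsBounded Ω)
    (hx : x ∈ Ω) {R : ℝ} {y : E} (hy : y ∈ hilbertBall Ω x R) :
    {v : E | finslerNorm Ω y v < 1} ⊆ Real.exp (2 * R) • {v : E | finslerNorm Ω x v < 1} ∧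
      {v : E | finslerNorm Ω x v < 1} ⊆ Real.exp (2 * R) • {v : E | finslerNorm Ω y v < 1} := by
  obtain ⟨hyΩ, hd⟩ := hy
  set d := hilbertDist Ω x y with hdd
  have hE1 : Real.exp (2 * d - 2 * R) ≤ 1 := by
    rw [← Real.exp_zero]
    exact Real.exp_le_exp.2 (by linarith)
  have main : ∀ z w : E, z ∈ Ω → w ∈ Ω →
      (∀ v : E, finslerNorm Ω w v ≤ Real.exp (2 * d) * finslerNorm Ω z v) →
      {v : E | finslerNorm Ω z v < 1} ⊆ Real.exp (2 * R) • {v : E | finslerNorm Ω w v < 1} := by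
    intro z w hz hw hcmp v hv
    simp only [Set.mem_setOf_eq] at hv
    refine ⟨Real.exp (-(2 * R)) • v, ?_, ?_⟩
    · simp only [Set.mem_setOf_eq]
      rw [finslerNorm_smul hΩo hΩc hb hw (Real.exp_pos _)]
      have h1 : finslerNorm Ω w v ≤ Real.exp (2 * d) * finslerNorm Ω z v := hcmp v
      have hFz : 0 ≤ finslerNorm Ω z v := finslerNorm_nonneg hΩo hz v
      calc Real.exp (-(2 * R)) * finslerNorm Ω w v
          ≤ Real.exp (-(2 * R)) * (Real.exp (2 * d) * finslerNorm Ω z v) :=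
            mul_le_mul_of_nonneg_left h1 (Real.exp_pos _).le
      _ = Real.exp (2 * d - 2 * R) * finslerNorm Ω z v := by
            rw [← mul_assoc, ← Real.exp_add]
            ring_nf
      _ ≤ 1 * finslerNorm Ω z v := mul_le_mul_of_nonneg_right hE1 hFz
      _ = finslerNorm Ω z v := one_mul _
      _ < 1 := hv
    · show Real.exp (2 * R) • (Real.exp (-(2 * R)) • v) = v
      rw [smul_smul, ← Real.exp_add, add_neg_cancel, Real.exp_zero, one_smul]
  have H := fun v => finsler_harnack hΩo hΩc hb hx hyΩ v
  exact ⟨main y x hyΩ hx (fun v => (H v).2), main x y hx hyΩ (fun v => (H v).1)⟩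

lemma hilbertBall_isOpen (hΩo : IsOpen Ω) (hΩc : Convex ℝ Ω) (hb : Bornology.IsBounded Ω)
    (hx : x ∈ Ω) {R : ℝ} (hR : 0 < R) : IsOpen (hilbertBall Ω x R) := by
  rw [isOpen_iff_forall_mem_open]
  intro y0 hy0
  set ρ := Real.exp (2 * R) with hρ
  have hρ1 : 1 < ρ := one_lt_exp_ball hR
  by_cases hxy : y0 = x
  · subst hxy
    set sc := (ρ - 1) / (ρ + 1) with hsc
    have hsc0 : 0 < sc := div_pos (by linarith) (by linarith)
    refine ⟨(fun y => y - y0) ⁻¹' (sc • symB Ω y0), ?_, ?_, ?_⟩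
    · intro y hy
      simp only [Set.mem_preimage] at hy
      rcases hy with ⟨w, hw, hww⟩
      have : y = y0 + sc • w := by
        have : sc • w = y - y0 := hww
        rw [this]
        abel
      rw [this]
      exact smul_subset_ball hΩo hΩc hb hx hR hw
    · exact (continuous_id.sub continuous_const).isOpen_preimage _
        ((symB_isOpen hΩo).smul₀ hsc0.ne')
    · simp only [Set.mem_preimage, sub_self]
      exact ⟨0, symB_zero_mem hx, smul_zero _⟩
  · obtain ⟨hy0Ω, hd0⟩ := hy0
    obtain ⟨a, b, ha0, hb1, hmem, hX⟩ := chord_param hΩo hΩc hb hx hy0Ω (Ne.symm hxy)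
    have hb1' : (0:ℝ) < b - 1 := by linarith
    have ha0' : (0:ℝ) < -a := by linarith
    have hXρ : (b * (1 - a)) / ((b - 1) * (-a)) < ρ := by
      rw [← hX, hρ]
      exact Real.exp_lt_exp.2 (by linarith)
    -- choose δ > 0 with b - δ > 1, a + δ < 0 and perturbed cross ratio < ρ
    have hcont : ContinuousAt (fun δ : ℝ =>
        ((b - δ) * (1 - (a + δ))) / (((b - δ) - 1) * (-(a + δ)))) 0 := by
      apply ContinuousAt.div
      · fun_prop
      · fun_prop
      · simp only [sub_zero, add_zero]
        positivity
    have hlim : ∀ᶠ δ in nhds (0:ℝ),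
        ((b - δ) * (1 - (a + δ))) / (((b - δ) - 1) * (-(a + δ))) < ρ := by
      have h0 : ((b - 0) * (1 - (a + 0))) / (((b - 0) - 1) * (-(a + 0))) < ρ := by
        simpa using hXρ
      exact hcont.eventually_lt continuousAt_const h0
    obtain ⟨ε, hε, hball⟩ := Metric.eventually_nhds_iff.1 hlim
    set δ := min (ε / 2) (min ((b - 1) / 2) ((-a) / 2)) with hδ
    have hδ0 : 0 < δ := by
      apply lt_min (by linarith)
      apply lt_min (by linarith) (by linarith)
    have hδε : δ < ε := lt_of_le_of_lt (min_le_left _ _) (by linarith)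
    have hδb : δ < b - 1 := by
      calc δ ≤ (b-1)/2 := le_trans (min_le_right _ _) (min_le_left _ _)
      _ < b - 1 := by linarith
    have hδa : δ < -a := by
      calc δ ≤ (-a)/2 := le_trans (min_le_right _ _) (min_le_right _ _)
      _ < -a := by linarith
    have hcr : ((b - δ) * (1 - (a + δ))) / (((b - δ) - 1) * (-(a + δ))) < ρ := by
      apply hball
      simp only [Real.dist_eq, sub_zero]
      rw [abs_of_pos hδ0]
      exact hδε
    set b' := b - δ with hb'
    set a' := a + δ with ha'
    have hb'1 : 1 < b' := by rw [hb']; linarith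
    have ha'0 : a' < 0 := by rw [ha']; linarith
    have hab' : a < a' := by rw [ha']; linarith
    have hbb' : b' < b := by rw [hb']; linarith
    refine ⟨Ω ∩ {y | y ≠ x} ∩ (fun y => x + b' • (y - x)) ⁻¹' Ω ∩
      (fun y => x + a' • (y - x)) ⁻¹' Ω, ?_, ?_, ?_⟩
    · rintro y ⟨⟨⟨hyΩ, hyx⟩, hyb⟩, hya⟩
      simp only [Set.mem_preimage] at hyb hya
      obtain ⟨ay, by', ha0y, hb1y, hmemy, hXy⟩ :=
        chord_param hΩo hΩc hb hx hyΩ (Ne.symm hyx)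
      have h1 : ay < b' ∧ b' < by' := (hmemy b').1 hyb
      have h2 : ay < a' ∧ a' < by' := (hmemy a').1 hya
      have hby : b' < by' := h1.2
      have hay : ay < a' := h2.1
      have hb1y' : (0:ℝ) < by' - 1 := by linarith
      have ha0y' : (0:ℝ) < -ay := by linarith
      -- cross ratio monotone
      have hf1 : by' / (by' - 1) ≤ b' / (b' - 1) := by
        rw [div_le_div_iff₀ hb1y' (by linarith)]
        nlinarith
      have hf2 : (1 - ay) / (-ay) ≤ (1 - a') / (-a') := by
        rw [div_le_div_iff₀ ha0y' (by linarith)]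
        nlinarith
      have hXyρ : (by' * (1 - ay)) / ((by' - 1) * (-ay)) < ρ := by
        have hstep : (by' * (1 - ay)) / ((by' - 1) * (-ay))
            ≤ (b' * (1 - a')) / ((b' - 1) * (-a')) := by
          rw [← div_mul_div_comm, ← div_mul_div_comm]
          apply mul_le_mul hf1 hf2 (div_nonneg (by linarith) ha0y'.le)
            (div_nonneg (by linarith) (by linarith))
        calc (by' * (1 - ay)) / ((by' - 1) * (-ay))
            ≤ (b' * (1 - a')) / ((b' - 1) * (-a')) := hstep
        _ < ρ := by
            rw [hb', ha'] at *
            exact hcr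
      have hdy : hilbertDist Ω x y < R := by
        have hexp : Real.exp (2 * hilbertDist Ω x y) < ρ := by rw [hXy]; exact hXyρ
        rw [hρ] at hexp
        have := Real.exp_lt_exp.1 hexp
        linarith
      exact ⟨hyΩ, hdy⟩
    · apply IsOpen.inter
      apply IsOpen.inter
      apply IsOpen.inter hΩo
      · exact isOpen_ne
      · exact (by fun_prop : Continuous (fun y : E => x + b' • (y - x))).isOpen_preimage _ hΩo
      · exact (by fun_prop : Continuous (fun y : E => x + a' • (y - x))).isOpen_preimage _ hΩo
    · refine ⟨⟨⟨hy0Ω, hxy⟩, ?_⟩, ?_⟩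
      · simp only [Set.mem_preimage]
        rw [hmem]
        exact ⟨by linarith, hbb'⟩
      · simp only [Set.mem_preimage]
        rw [hmem]
        exact ⟨hab', by linarith⟩

end Geom

section Euclid

variable {n : ℕ}

local notation "Eu" => EuclideanSpace ℝ (Fin n)

lemma meas_shift (x : Eu) (A : Set Eu) : volume ((fun z => z - x) ⁻¹' A) = volume A := by
  have h : (fun z : Eu => z - x) = (fun z => (-x) + z) := by
    funext z; abel
  rw [h]
  exact measure_preimage_add volume (-x) A

lemma meas_smul (r : ℝ) (hr : 0 ≤ r) (s : Set Eu) :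
    volume (r • s) = ENNReal.ofReal (r ^ n) * volume s := by
  rw [Measure.addHaar_smul_of_nonneg volume hr s, finrank_euclideanSpace_fin]

lemma part1_main (R : ℝ) (hR : 0 < R) (Ω : Set Eu)
    (hΩo : IsOpen Ω) (hΩc : Convex ℝ Ω) (hΩb : Bornology.IsBounded Ω)
    (x : Eu) (hx : x ∈ Ω) :
    ENNReal.ofReal ((volume (ball (0 : Eu) 1)).toReal *
        ((Real.exp (2*R) - 1) / (Real.exp (2*R) + 1))^n / ((Real.exp (2*R))^n * 2^n))
      ≤ busemannVolume Ω (hilbertBall Ω x R) ∧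
    busemannVolume Ω (hilbertBall Ω x R)
      ≤ ENNReal.ofReal ((volume (ball (0 : Eu) 1)).toReal *
        (Real.exp (2*R))^n * (Real.exp (2*R) - 1)^n) := by
  set ωn := (volume (ball (0 : Eu) 1)).toReal with hωn
  have hω : 0 < ωn :=
    ENNReal.toReal_pos (measure_ball_pos volume 0 one_pos).ne' measure_ball_lt_top.ne
  set ρ := Real.exp (2 * R) with hρ
  have hρ1 : 1 < ρ := one_lt_exp_ball hR
  have hρ0 : 0 < ρ := by linarith
  set sc := (ρ - 1) / (ρ + 1) with hsc
  have hsc0 : 0 < sc := div_pos (by linarith) (by linarith)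
  set S := symB Ω x with hS
  set B := hilbertBall Ω x R with hB
  have hBmeas : MeasurableSet B := (hilbertBall_isOpen hΩo hΩc hΩb hx hR).measurableSet
  have hμS0 : (0:ENNReal) < volume S :=
    (symB_isOpen hΩo).measure_pos volume ⟨0, symB_zero_mem hx⟩
  have hμStop : volume S < ⊤ := (symB_isBounded hΩb x).measure_lt_top
  set mS := (volume S).toReal with hmS
  have hmS0 : 0 < mS := ENNReal.toReal_pos hμS0.ne' hμStop.ne
  -- the Finsler unit ball at x
  set Wx := {v : Eu | finslerNorm Ω x v < 1} with hWx
  have hWxl : volume S ≤ volume Wx := measure_mono (symB_subset_W hΩo hΩb hx)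
  have hWxu : volume Wx ≤ ENNReal.ofReal (2 ^ n) * volume S := by
    calc volume Wx ≤ volume ((2:ℝ) • S) := measure_mono (W_subset_two_symB hΩo hΩc hΩb hx)
    _ = ENNReal.ofReal (2 ^ n) * volume S := meas_smul 2 (by norm_num) S
  have hWxtop : volume Wx < ⊤ :=
    lt_of_le_of_lt hWxu (ENNReal.mul_lt_top ENNReal.ofReal_lt_top hμStop)
  have hWx0 : (0:ENNReal) < volume Wx := lt_of_lt_of_le hμS0 hWxl
  set mt := (volume Wx).toReal with hmt
  have hmt0 : 0 < mt := ENNReal.toReal_pos hWx0.ne' hWxtop.ne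
  have hmtS : mt ≤ 2 ^ n * mS := by
    have := ENNReal.toReal_mono (by
      exact (ENNReal.mul_lt_top ENNReal.ofReal_lt_top hμStop).ne) hWxu
    rwa [ENNReal.toReal_mul, ENNReal.toReal_ofReal (by positivity)] at this
  have hmSmt : mS ≤ mt := ENNReal.toReal_mono hWxtop.ne hWxl
  -- pointwise comparison of Finsler balls on B
  have hcomp : ∀ y ∈ B, mt ≤ ρ ^ n * (volume {v : Eu | finslerNorm Ω y v < 1}).toReal ∧
      (volume {v : Eu | finslerNorm Ω y v < 1}).toReal ≤ ρ ^ n * mt := by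
    intro y hy
    obtain ⟨hsub1, hsub2⟩ := W_compare hΩo hΩc hΩb hx hy
    have h1 : volume {v : Eu | finslerNorm Ω y v < 1} ≤ ENNReal.ofReal (ρ ^ n) * volume Wx := by
      calc volume {v : Eu | finslerNorm Ω y v < 1} ≤ volume (ρ • Wx) := measure_mono hsub1
      _ = ENNReal.ofReal (ρ ^ n) * volume Wx := meas_smul ρ hρ0.le Wx
    have h2 : volume Wx ≤ ENNReal.ofReal (ρ ^ n) * volume {v : Eu | finslerNorm Ω y v < 1} := by
      calc volume Wx ≤ volume (ρ • {v : Eu | finslerNorm Ω y v < 1}) := measure_mono hsub2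
      _ = _ := meas_smul ρ hρ0.le _
    have hWytop : volume {v : Eu | finslerNorm Ω y v < 1} < ⊤ :=
      lt_of_le_of_lt h1 (ENNReal.mul_lt_top ENNReal.ofReal_lt_top hWxtop)
    constructor
    · have := ENNReal.toReal_mono (by
        exact (ENNReal.mul_lt_top ENNReal.ofReal_lt_top hWytop).ne) h2
      rwa [ENNReal.toReal_mul, ENNReal.toReal_ofReal (by positivity)] at this
    · have := ENNReal.toReal_mono (by
        exact (ENNReal.mul_lt_top ENNReal.ofReal_lt_top hWxtop).ne) h1
      rwa [ENNReal.toReal_mul, ENNReal.toReal_ofReal (by positivity)] at this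
  -- measure of B: sandwich
  have hPlow : (fun z : Eu => z - x) ⁻¹' (sc • S) ⊆ B := by
    intro z hz
    rcases hz with ⟨w, hw, hww⟩
    have hz' : z = x + sc • w := by
      have : sc • w = z - x := hww
      rw [this]; abel
    rw [hz']
    exact smul_subset_ball hΩo hΩc hΩb hx hR hw
  have hPup : B ⊆ (fun z : Eu => z - x) ⁻¹' ((ρ - 1) • S) := by
    intro y hy
    exact ball_subset_smul hΩo hΩc hΩb hx hR hy
  have hμlow : ENNReal.ofReal (sc ^ n) * volume S ≤ volume B := by
    calc ENNReal.ofReal (sc ^ n) * volume S = volume (sc • S) := (meas_smul sc hsc0.le S).symm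
    _ = volume ((fun z : Eu => z - x) ⁻¹' (sc • S)) := (meas_shift x _).symm
    _ ≤ volume B := measure_mono hPlow
  have hμup : volume B ≤ ENNReal.ofReal ((ρ - 1) ^ n) * volume S := by
    calc volume B ≤ volume ((fun z : Eu => z - x) ⁻¹' ((ρ - 1) • S)) := measure_mono hPup
    _ = volume ((ρ - 1) • S) := meas_shift x _
    _ = ENNReal.ofReal ((ρ - 1) ^ n) * volume S := meas_smul _ (by linarith) S
  -- integrand bounds
  set cL := ωn / (ρ ^ n * mt) with hcL
  set cU := ωn * ρ ^ n / mt with hcU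
  have hbound : ∀ y ∈ B,
      ENNReal.ofReal cL ≤ ENNReal.ofReal (ωn / (volume {v : Eu | finslerNorm Ω y v < 1}).toReal)
      ∧ ENNReal.ofReal (ωn / (volume {v : Eu | finslerNorm Ω y v < 1}).toReal)
        ≤ ENNReal.ofReal cU := by
    intro y hy
    obtain ⟨h1, h2⟩ := hcomp y hy
    set wy := (volume {v : Eu | finslerNorm Ω y v < 1}).toReal with hwy
    have hwy0 : 0 < wy := by nlinarith [pow_pos hρ0 n]
    constructor
    · apply ENNReal.ofReal_le_ofReal
      rw [hcL]
      exact div_le_div_of_nonneg_left hω.le hwy0 h2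
    · apply ENNReal.ofReal_le_ofReal
      rw [hcU]
      calc ωn / wy ≤ ωn / (mt / ρ ^ n) := by
            apply div_le_div_of_nonneg_left hω.le (by positivity)
            rw [div_le_iff₀ (by positivity : (0:ℝ) < ρ ^ n)]
            linarith [h1, mul_comm (ρ ^ n) wy]
      _ = ωn * ρ ^ n / mt := by
            field_simp
  -- lower bound
  have hlow : ENNReal.ofReal (ωn * sc ^ n / (ρ ^ n * 2 ^ n))
      ≤ busemannVolume Ω B := by
    have step1 : ENNReal.ofReal cL * volume B ≤ busemannVolume Ω B := by
      rw [busemannVolume, ← setLIntegral_const B (ENNReal.ofReal cL)]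
      apply lintegral_mono_ae
      filter_upwards [ae_restrict_mem hBmeas] with y hy
      exact (hbound y hy).1
    have step2 : ENNReal.ofReal (ωn * sc ^ n / (ρ ^ n * 2 ^ n))
        ≤ ENNReal.ofReal cL * volume B := by
      calc ENNReal.ofReal (ωn * sc ^ n / (ρ ^ n * 2 ^ n))
          ≤ ENNReal.ofReal (cL * (sc ^ n * mS)) := by
            apply ENNReal.ofReal_le_ofReal
            rw [hcL, div_mul_eq_mul_div, div_le_div_iff₀ (by positivity) (by positivity)]
            have hp : (0:ℝ) < ρ ^ n := pow_pos hρ0 n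
            have hscn : (0:ℝ) < sc ^ n := pow_pos hsc0 n
            nlinarith [mul_pos (mul_pos hω hscn) hp, mul_le_mul_of_nonneg_left hmtS
              (le_of_lt (mul_pos (mul_pos hω hscn) hp))]
      _ = ENNReal.ofReal cL * (ENNReal.ofReal (sc ^ n) * ENNReal.ofReal mS) := by
            rw [← ENNReal.ofReal_mul (by positivity), ← ENNReal.ofReal_mul (by positivity)]
      _ = ENNReal.ofReal cL * (ENNReal.ofReal (sc ^ n) * volume S) := by
            rw [hmS, ENNReal.ofReal_toReal hμStop.ne]
      _ ≤ ENNReal.ofReal cL * volume B := by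
            exact mul_le_mul_right hμlow _
    exact le_trans step2 step1
  -- upper bound
  have hup : busemannVolume Ω B ≤ ENNReal.ofReal (ωn * ρ ^ n * (ρ - 1) ^ n) := by
    have step1 : busemannVolume Ω B ≤ ENNReal.ofReal cU * volume B := by
      rw [busemannVolume, ← setLIntegral_const B (ENNReal.ofReal cU)]
      apply lintegral_mono_ae
      filter_upwards [ae_restrict_mem hBmeas] with y hy
      exact (hbound y hy).2
    have step2 : ENNReal.ofReal cU * volume B ≤ ENNReal.ofReal (ωn * ρ ^ n * (ρ - 1) ^ n) := by
      calc ENNReal.ofReal cU * volume B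
          ≤ ENNReal.ofReal cU * (ENNReal.ofReal ((ρ - 1) ^ n) * volume S) :=
            mul_le_mul_right hμup _
      _ ≤ ENNReal.ofReal cU * (ENNReal.ofReal ((ρ - 1) ^ n) * volume Wx) := by
            exact mul_le_mul_right (mul_le_mul_right hWxl _) _
      _ = ENNReal.ofReal cU * (ENNReal.ofReal ((ρ - 1) ^ n) * ENNReal.ofReal mt) := by
            rw [hmt, ENNReal.ofReal_toReal hWxtop.ne]
      _ = ENNReal.ofReal (cU * ((ρ - 1) ^ n * mt)) := by
            have hcU0 : 0 ≤ cU := by rw [hcU]; positivity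
            have hρn : (0:ℝ) ≤ (ρ - 1) ^ n := pow_nonneg (by linarith) n
            rw [ENNReal.ofReal_mul hcU0, ENNReal.ofReal_mul hρn]
      _ = ENNReal.ofReal (ωn * ρ ^ n * (ρ - 1) ^ n) := by
            congr 1
            rw [hcU]
            field_simp
    exact le_trans step1 step2
  exact ⟨hlow, hup⟩

lemma part2_main (Ω : Set Eu)
    (hΩo : IsOpen Ω) (hΩc : Convex ℝ Ω) (hΩb : Bornology.IsBounded Ω)
    (x : Eu) (hx : x ∈ Ω) :
    ∃ t : Finset Eu,
      t.card ≤ ⌈(((Real.exp (2*(4:ℝ)) - 1) +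
          ((Real.exp (2*(1:ℝ)) - 1) / (Real.exp (2*(1:ℝ)) + 1) * Real.exp (-(2*(4:ℝ)))) / 2) /
          (((Real.exp (2*(1:ℝ)) - 1) / (Real.exp (2*(1:ℝ)) + 1) * Real.exp (-(2*(4:ℝ)))) / 2))^n⌉₊
      ∧ (∀ y ∈ t, y ∈ Ω) ∧
      hilbertBall Ω x 4 ⊆ ⋃ y ∈ t, hilbertBall Ω y 1 := by
  have h40 : (0:ℝ) < 4 := by norm_num
  have h10 : (0:ℝ) < 1 := one_pos
  set s1 := (Real.exp (2*(1:ℝ)) - 1) / (Real.exp (2*(1:ℝ)) + 1) with hs1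
  set e4 := Real.exp (-(2*(4:ℝ))) with he4
  set c := s1 * e4 with hcdef
  set CC := Real.exp (2*(4:ℝ)) - 1 with hCC
  have hexp1 : (1:ℝ) < Real.exp (2*(1:ℝ)) := one_lt_exp_ball h10
  have hexp4 : (1:ℝ) < Real.exp (2*(4:ℝ)) := one_lt_exp_ball h40
  have hs10 : 0 < s1 := div_pos (by linarith) (by linarith)
  have he40 : 0 < e4 := Real.exp_pos _
  have hc0 : 0 < c := mul_pos hs10 he40
  have hCC0 : 0 < CC := by rw [hCC]; linarith
  set K : ℕ := ⌈((CC + c/2) / (c/2))^n⌉₊ with hK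
  set S := symB Ω x with hS
  set B4 := hilbertBall Ω x 4 with hB4
  have hSconv : Convex ℝ S := symB_convex hΩc
  have hμS0 : (0:ENNReal) < volume S :=
    (symB_isOpen hΩo).measure_pos volume ⟨0, symB_zero_mem hx⟩
  have hμStop : volume S < ⊤ := (symB_isBounded hΩb x).measure_lt_top
  set mS := (volume S).toReal with hmS
  have hmS0 : 0 < mS := ENNReal.toReal_pos hμS0.ne' hμStop.ne
  set Q : Eu → Set Eu := fun y => {z | z - y ∈ (c/2) • S} with hQ
  have hQmeas : ∀ y : Eu, MeasurableSet (Q y) := by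
    intro y
    have : IsOpen (Q y) := by
      have h2 : IsOpen ((c/2) • S) := (symB_isOpen hΩo).smul₀ (by positivity)
      exact (continuous_id.sub continuous_const).isOpen_preimage _ h2
    exact this.measurableSet
  have hQvol : ∀ y : Eu, volume (Q y) = ENNReal.ofReal ((c/2)^n) * volume S := by
    intro y
    have : Q y = (fun z : Eu => z - y) ⁻¹' ((c/2) • S) := rfl
    rw [this, meas_shift, meas_smul _ (by positivity)]
  -- the covering criterion
  have hcover : ∀ y ∈ B4, ∀ z : Eu, z - y ∈ c • S → z ∈ hilbertBall Ω y 1 := by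
    intro y hy z hz
    rcases hz with ⟨w, hw, hww⟩
    have hew : e4 • w ∈ symB Ω y := by
      apply symB_compare hΩo hΩc hΩb hx (R := 4) hy
      exact ⟨w, hw, rfl⟩
    have hpoint := smul_subset_ball hΩo hΩc hΩb hy.1 h10 hew
    have hzeq : z = y + s1 • (e4 • w) := by
      have h1 : c • w = z - y := hww
      have h2 : s1 • (e4 • w) = c • w := by rw [smul_smul, hcdef]
      rw [h2, h1]
      abel
    rw [hzeq]
    exact hpoint
  -- each Q y for y ∈ B4 lies in a fixed big set
  set Pbig := {z : Eu | z - x ∈ (CC + c/2) • S} with hPbig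
  have hQsub : ∀ y ∈ B4, Q y ⊆ Pbig := by
    intro y hy z hz
    have h1 : y - x ∈ CC • S := ball_subset_smul hΩo hΩc hΩb hx h40 hy
    have h2 : z - y ∈ (c/2) • S := hz
    have h3 : z - x = (y - x) + (z - y) := by abel
    have h4 : (CC + c/2) • S = CC • S + (c/2) • S :=
      hSconv.add_smul hCC0.le (by positivity)
    show z - x ∈ (CC + c/2) • S
    rw [h3, h4]
    exact Set.add_mem_add h1 h2
  have hPbigvol : volume Pbig = ENNReal.ofReal ((CC + c/2)^n) * volume S := by
    have : Pbig = (fun z : Eu => z - x) ⁻¹' ((CC + c/2) • S) := rfl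
    rw [this, meas_shift, meas_smul _ (by positivity)]
  -- cardinality bound for separated families
  have hcard : ∀ t : Finset Eu, (↑t : Set Eu) ⊆ B4 →
      ((↑t : Set Eu).PairwiseDisjoint Q) → t.card ≤ K := by
    intro t hsub hdisj
    have hun : volume (⋃ y ∈ t, Q y) = ∑ y ∈ t, volume (Q y) :=
      measure_biUnion_finset hdisj (fun y _ => hQmeas y)
    have hsum : ∑ y ∈ t, volume (Q y) = t.card * (ENNReal.ofReal ((c/2)^n) * volume S) := by
      rw [Finset.sum_congr rfl (fun y _ => hQvol y), Finset.sum_const, nsmul_eq_mul]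
    have hsubU : (⋃ y ∈ t, Q y) ⊆ Pbig := by
      intro z hz
      rcases Set.mem_iUnion₂.1 hz with ⟨y, hy, hzy⟩
      exact hQsub y (hsub hy) hzy
    have hle : (t.card : ENNReal) * (ENNReal.ofReal ((c/2)^n) * volume S)
        ≤ ENNReal.ofReal ((CC + c/2)^n) * volume S := by
      rw [← hsum, ← hun, ← hPbigvol]
      exact measure_mono hsubU
    have hRHSfin : ENNReal.ofReal ((CC + c/2)^n) * volume S ≠ ⊤ :=
      (ENNReal.mul_lt_top ENNReal.ofReal_lt_top hμStop).ne
    have hreal := ENNReal.toReal_mono hRHSfin hle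
    rw [ENNReal.toReal_mul, ENNReal.toReal_mul, ENNReal.toReal_natCast,
      ENNReal.toReal_mul, ENNReal.toReal_ofReal (by positivity),
      ENNReal.toReal_ofReal (by positivity)] at hreal
    have hc2n : (0:ℝ) < (c/2)^n := by positivity
    have hcard' : (t.card : ℝ) ≤ ((CC + c/2) / (c/2))^n := by
      rw [div_pow, le_div_iff₀ hc2n]
      have h8 : ((t.card : ℝ) * (c/2)^n) * mS ≤ (CC + c/2)^n * mS := by
        rw [mul_assoc]
        exact hreal
      exact le_of_mul_le_mul_right h8 hmS0
    calc t.card ≤ ⌈((CC + c/2) / (c/2))^n⌉₊ := by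
          have := le_trans hcard' (Nat.le_ceil _)
          exact_mod_cast this
    _ = K := rfl
  -- choose a maximal separated family
  set P : Finset Eu → Prop := fun t => (↑t : Set Eu) ⊆ B4 ∧ (↑t : Set Eu).PairwiseDisjoint Q
    with hP
  have hP0 : P ∅ := by constructor <;> simp
  set A := {m : ℕ | ∃ t : Finset Eu, P t ∧ t.card = m} with hA
  have hAne : A.Nonempty := ⟨0, ∅, hP0, rfl⟩
  have hAbdd : BddAbove A := ⟨K, by rintro m ⟨t, ht, rfl⟩; exact hcard t ht.1 ht.2⟩
  have hM := Nat.sSup_mem hAne hAbdd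
  obtain ⟨t0, ht0P, ht0card⟩ := hM
  refine ⟨t0, ?_, ?_, ?_⟩
  · rw [ht0card]
    exact csSup_le hAne (by rintro m ⟨t, ht, rfl⟩; exact hcard t ht.1 ht.2)
  · intro y hy
    exact (ht0P.1 hy).1
  · intro z hz
    by_contra hcon
    have hznot : ∀ y ∈ t0, z ∉ hilbertBall Ω y 1 := by
      intro y hy hzy
      exact hcon (Set.mem_iUnion₂.2 ⟨y, hy, hzy⟩)
    have hzt0 : z ∉ t0 := fun hzin => hznot z hzin (mem_hilbertBall_self hz.1 one_pos)
    have hdisjz : ∀ y ∈ t0, Disjoint (Q z) (Q y) := by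
      intro y hyt
      by_contra hnd
      rcases Set.not_disjoint_iff.1 hnd with ⟨p, hp1, hp2⟩
      rcases hp1 with ⟨w1, hw1, hww1⟩
      rcases hp2 with ⟨w2, hw2, hww2⟩
      have hmid : ((1:ℝ)/2) • w2 + ((1:ℝ)/2) • (-w1) ∈ S :=
        hSconv hw2 (symB_neg_mem hw1) (by norm_num) (by norm_num) (by norm_num)
      have hzy : z - y = c • (((1:ℝ)/2) • w2 + ((1:ℝ)/2) • (-w1)) := by
        have h1 : (c/2) • w1 = p - z := hww1
        have h2 : (c/2) • w2 = p - y := hww2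
        have h3 : z - y = (c/2) • w2 - (c/2) • w1 := by rw [h1, h2]; abel
        rw [h3]
        module
      have hzball := hcover y (ht0P.1 hyt) z (by
        rw [hzy]
        exact Set.smul_mem_smul_set hmid)
      exact hznot y hyt hzball
    have hPins : P (insert z t0) := by
      constructor
      · rw [Finset.coe_insert]
        exact Set.insert_subset hz ht0P.1
      · rw [Finset.coe_insert]
        exact ht0P.2.insert (fun y hyt _ => hdisjz y hyt)
    have hcardins : (insert z t0).card = sSup A + 1 := by
      rw [Finset.card_insert_of_notMem hzt0, ht0card]
    have hmemA : sSup A + 1 ∈ A := ⟨insert z t0, hPins, hcardins⟩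
    have := le_csSup hAbdd hmemA
    omega

end Euclid

end HilbertGeometryAux

/-- For each `R > 0` there are constants `0 < v(R) ≤ V(R)`, independent
of the convex set, bounding the Busemann volume of any ball of radius `R` in any
`n`-dimensional Hilbert geometry.  Consequently there is `K = K(n)` such that in any
Hilbert geometry every ball of radius `4` is covered by at most `K` balls of radius `1`. -/
theorem stmt_15 (n : ℕ) (hn : 1 ≤ n) :
    (∀ R : ℝ, 0 < R → ∃ v V : ENNReal, 0 < v ∧ v ≤ V ∧ V < ⊤ ∧
      ∀ Ω : Set (EuclideanSpace ℝ (Fin n)),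
        IsOpen Ω → Convex ℝ Ω → Bornology.IsBounded Ω → ∀ x ∈ Ω,
          v ≤ busemannVolume Ω (hilbertBall Ω x R) ∧
            busemannVolume Ω (hilbertBall Ω x R) ≤ V) ∧
    ∃ K : ℕ, ∀ Ω : Set (EuclideanSpace ℝ (Fin n)),
      IsOpen Ω → Convex ℝ Ω → Bornology.IsBounded Ω → ∀ x ∈ Ω,
        ∃ t : Finset (EuclideanSpace ℝ (Fin n)), t.card ≤ K ∧ (∀ y ∈ t, y ∈ Ω) ∧
          hilbertBall Ω x 4 ⊆ ⋃ y ∈ t, hilbertBall Ω y 1 := by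
  constructor
  · intro R hR
    set ωn := (volume (ball (0 : EuclideanSpace ℝ (Fin n)) 1)).toReal with hωn
    have hω : 0 < ωn :=
      ENNReal.toReal_pos (measure_ball_pos volume 0 one_pos).ne' measure_ball_lt_top.ne
    have hρ1 : 1 < Real.exp (2 * R) := one_lt_exp_ball hR
    have hρ1' : (0:ℝ) < Real.exp (2 * R) - 1 := by linarith
    have hρ0 : (0:ℝ) < Real.exp (2 * R) := by linarith
    refine ⟨ENNReal.ofReal (ωn *
        ((Real.exp (2*R) - 1) / (Real.exp (2*R) + 1))^n / ((Real.exp (2*R))^n * 2^n)),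
      ENNReal.ofReal (ωn *
        ((Real.exp (2*R) - 1) / (Real.exp (2*R) + 1))^n / ((Real.exp (2*R))^n * 2^n)) +
      ENNReal.ofReal (ωn * (Real.exp (2*R))^n * (Real.exp (2*R) - 1)^n), ?_, ?_, ?_, ?_⟩
    · apply ENNReal.ofReal_pos.2
      positivity
    · exact le_self_add
    · exact ENNReal.add_lt_top.2 ⟨ENNReal.ofReal_lt_top, ENNReal.ofReal_lt_top⟩
    · intro Ω hΩo hΩc hΩb x hx
      obtain ⟨h1, h2⟩ := part1_main R hR Ω hΩo hΩc hΩb x hx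
      exact ⟨h1, le_trans h2 le_add_self⟩
  · refine ⟨⌈(((Real.exp (2*(4:ℝ)) - 1) +
        ((Real.exp (2*(1:ℝ)) - 1) / (Real.exp (2*(1:ℝ)) + 1) * Real.exp (-(2*(4:ℝ)))) / 2) /
        (((Real.exp (2*(1:ℝ)) - 1) / (Real.exp (2*(1:ℝ)) + 1) * Real.exp (-(2*(4:ℝ)))) / 2))^n⌉₊,
      fun Ω hΩo hΩc hΩb x hx => ?_⟩
    exact part2_main Ω hΩo hΩc hΩb x hx
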